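/- Let F be a simplicial function space and 𝒯 a simplicial complex of maximal dimension n containing at least one face of each dimension m+1 ≤ n. If the face poset of 𝒯 admits local extension operators E^𝒯_K for all faces K, then F admits simplicial extension operators E_m : F̊(T^m) → F(Q^{m+1}) for every m < n. -/

import Mathlib

open CategoryTheory Opposite

-- A simplicial function space: a contravariant functor from (vertex sets of) simplices
-- with simplicial maps — equivalently, finite sets with arbitrary maps — to real vector
-- spaces.  A simplicial map between simplices is the affine map determined by an
-- arbitrary map of vertex sets.
variable (𝓕 : FintypeCatᵒᵖ ⥤ ModuleCat ℝ)

-- The ambient vertex set of the simplicial complex.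
variable {Vt : Type} [DecidableEq Vt]

/-- The inclusion of the vertex set of a subface. -/
def inclF {G F : Finset Vt} (h : G ⊆ F) :
    FintypeCat.of (↥G) ⟶ FintypeCat.of (↥F) :=
  FintypeCat.homMk fun x => ⟨x.1, h x.2⟩

/-- The value of the simplicial function space on (the simplex with) a vertex set. -/
abbrev Fobj (α : Type) [Fintype α] := 𝓕.obj (op (FintypeCat.of α))

/-- The trace (restriction) map to a subface. -/
def trF {G F : Finset Vt} (h : G ⊆ F) : Fobj 𝓕 ↥F →ₗ[ℝ] Fobj 𝓕 ↥G :=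
  (𝓕.map (inclF h).op).hom

/-- The inclusion of a face of a simplex, as a map of vertex sets. -/
def inclA {α : Type} [Fintype α] (S : Finset α) :
    FintypeCat.of (↥S) ⟶ FintypeCat.of α :=
  FintypeCat.homMk fun x => x.1

/-- The vanishing-trace subspace: elements whose trace to every proper (nonempty)
face vanishes. -/
def vanishA (α : Type) [Fintype α] [DecidableEq α] : Submodule ℝ (Fobj 𝓕 α) where
  carrier := {φ | ∀ S : Finset α, S.Nonempty → S ≠ Finset.univ →
    𝓕.map (inclA S).op φ = 0}
  add_mem' := by intro a b ha hb S h1 h2; simp [map_add, ha S h1 h2, hb S h1 h2]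
  zero_mem' := by intro S h1 h2; simp
  smul_mem' := by intro c a ha S h1 h2; simp [map_smul, ha S h1 h2]

/-- The global function space of a simplicial complex with face set `faces`,
as an inverse limit over the face poset. -/
def GlobC (faces : Set (Finset Vt)) :
    Submodule ℝ (∀ F : faces, Fobj 𝓕 ↥F.1) where
  carrier := {φ | ∀ (G F : faces) (h : G.1 ⊆ F.1), trF 𝓕 h (φ F) = φ G}
  add_mem' := by intro a b ha hb G F h; simp [map_add, ha G F h, hb G F h]
  zero_mem' := by intro G F h; simp
  smul_mem' := by intro c a ha G F h; simp [map_smul, ha G F h]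

-- The standard m-simplex T^m has vertex set Fin (m+1); the standard (m+1)-simplex
-- Q^(m+1) has vertex set Fin (m+2), with T^m included as the face missing the last
-- vertex (the origin).
def castMap (m : ℕ) : FintypeCat.of (Fin (m + 1)) ⟶ FintypeCat.of (Fin (m + 2)) :=
  FintypeCat.homMk Fin.castSucc

-- T^m as a face (vertex subset) of Q^(m+1).
def Tface (m : ℕ) : Finset (Fin (m + 2)) :=
  (Finset.univ : Finset (Fin (m + 1))).image Fin.castSucc

/-- Contravariant functoriality, applied pointwise. -/
lemma mapc {A B C : FintypeCat} (a : A ⟶ B) (b : B ⟶ C) (x : 𝓕.obj (op C)) :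
    𝓕.map (a ≫ b).op x = 𝓕.map a.op (𝓕.map b.op x) := by
  rw [op_comp, Functor.map_comp]; rfl

/-- Membership in `Tface m`. -/
lemma mem_Tface {m : ℕ} (j : Fin (m + 2)) : j ∈ Tface m ↔ (j : ℕ) < m + 1 := by
  constructor
  · intro hj
    obtain ⟨i, _, rfl⟩ := Finset.mem_image.mp hj
    exact i.2
  · intro hj
    exact Finset.mem_image.mpr ⟨⟨(j : ℕ), hj⟩, Finset.mem_univ _, by
      apply Fin.ext; simp⟩

lemma Tface_card (m : ℕ) : (Tface m).card = m + 1 := by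
  rw [Tface, Finset.card_image_of_injective _ (Fin.castSucc_injective _)]
  simp

/-- Converse: if the face poset of a simplicial complex of maximal dimension n,
containing at least one face of each dimension up to n, admits local extension
operators, then the simplicial function space admits simplicial extension operators
E_m : F̊(T^m) → F(Q^(m+1)) for every m < n. -/
theorem local_extension_operators_yield_simplicial_extension_operators
    (n : ℕ)
    (faces : Set (Finset Vt))
    (hnonempty : ∀ F ∈ faces, F.Nonempty)
    (hdown : ∀ F ∈ faces, ∀ G : Finset Vt, G ⊆ F → G.Nonempty → G ∈ faces)
    (hdim : ∀ F ∈ faces, F.card ≤ n + 1)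
    (hex : ∀ m : ℕ, m ≤ n → ∃ F ∈ faces, F.card = m + 1)
    (Eloc : ∀ K : faces, vanishA 𝓕 ↥K.1 →ₗ[ℝ] GlobC 𝓕 faces)
    (hL1 : ∀ (K : faces) (ψ : vanishA 𝓕 ↥K.1),
      ((Eloc K ψ : ∀ F : faces, Fobj 𝓕 ↥F.1) K) = (ψ : Fobj 𝓕 ↥K.1))
    (hL2 : ∀ (K F : faces), ¬ K.1 ⊆ F.1 → ∀ ψ : vanishA 𝓕 ↥K.1,
      ((Eloc K ψ : ∀ F : faces, Fobj 𝓕 ↥F.1) F) = 0) :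
    ∀ m, m < n → ∃ Em : vanishA 𝓕 (Fin (m + 1)) →ₗ[ℝ] Fobj 𝓕 (Fin (m + 2)),
      (∀ ψ : vanishA 𝓕 (Fin (m + 1)),
        𝓕.map (castMap m).op (Em ψ) = (ψ : Fobj 𝓕 (Fin (m + 1)))) ∧
      (∀ S : Finset (Fin (m + 2)), S.Nonempty → S ≠ Finset.univ → S ≠ Tface m →
        ∀ ψ : vanishA 𝓕 (Fin (m + 1)), 𝓕.map (inclA S).op (Em ψ) = 0) := by
  intro m hm
  obtain ⟨F, hF, hFcard⟩ := hex (m + 1) hm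
  set eF : Fin (m + 2) ≃ ↥F := (F.equivFinOfCardEq hFcard).symm with heF
  have heFinj : Function.Injective (fun i : Fin (m + 2) => ((eF i : ↥F) : Vt)) :=
    Subtype.val_injective.comp eF.injective
  set K : Finset Vt := (Tface m).image (fun i => ((eF i : ↥F) : Vt)) with hK
  have hKF : K ⊆ F := by
    intro x hx
    obtain ⟨i, _, rfl⟩ := Finset.mem_image.mp hx
    exact (eF i).2
  have hKcard : K.card = m + 1 := by
    rw [hK, Finset.card_image_of_injective _ heFinj, Tface_card]
  have hKne : K.Nonempty := Finset.card_pos.mp (by omega)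
  have hKfaces : K ∈ faces := hdown F hF K hKF hKne
  set Kf : faces := ⟨K, hKfaces⟩ with hKf
  set Ff : faces := ⟨F, hF⟩ with hFf
  -- the bijection `Fin (m+1) ≃ K`
  have hgmem : ∀ i : Fin (m + 1), ((eF i.castSucc : ↥F) : Vt) ∈ K := by
    intro i
    exact Finset.mem_image.mpr ⟨i.castSucc, (mem_Tface _).mpr i.2, rfl⟩
  set g : FintypeCat.of (Fin (m + 1)) ⟶ FintypeCat.of ↥K :=
    FintypeCat.homMk (fun i => ⟨((eF i.castSucc : ↥F) : Vt), hgmem i⟩) with hg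
  have hfaux : ∀ x : ↥K, ((eF.symm ⟨x.1, hKF x.2⟩ : Fin (m + 2)) : ℕ) < m + 1 := by
    intro x
    obtain ⟨j, hj, hjx⟩ := Finset.mem_image.mp x.2
    have : eF.symm ⟨x.1, hKF x.2⟩ = j := by
      apply eF.injective
      rw [Equiv.apply_symm_apply]
      exact Subtype.ext hjx.symm
    rw [this]
    exact (mem_Tface j).mp hj
  set f : FintypeCat.of ↥K ⟶ FintypeCat.of (Fin (m + 1)) :=
    FintypeCat.homMk (fun x => ⟨((eF.symm ⟨x.1, hKF x.2⟩ : Fin (m + 2)) : ℕ), hfaux x⟩) with hf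
  have hfg : ∀ i : Fin (m + 1), f (g i) = i := by
    intro i
    have : eF.symm ⟨((eF i.castSucc : ↥F) : Vt), hKF (hgmem i)⟩ = i.castSucc := by
      apply eF.injective
      rw [Equiv.apply_symm_apply]
    apply Fin.ext
    show ((eF.symm ⟨((eF i.castSucc : ↥F) : Vt), _⟩ : Fin (m + 2)) : ℕ) = (i : ℕ)
    rw [this]; rfl
  have hgf : ∀ x : ↥K, g (f x) = x := by
    intro x
    apply Subtype.ext
    show ((eF (Fin.castSucc (f x)) : ↥F) : Vt) = (x : Vt)
    have hcast : Fin.castSucc (f x) = eF.symm ⟨x.1, hKF x.2⟩ := by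
      apply Fin.ext; rfl
    rw [hcast, Equiv.apply_symm_apply]
  have hfinj : Function.Injective (f : ↥K → Fin (m + 1)) := by
    intro a b hab
    have := congrArg g hab
    rwa [hgf, hgf] at this
  set u : FintypeCat.of (Fin (m + 2)) ⟶ FintypeCat.of ↥F := FintypeCat.homMk (fun i => eF i) with hu
  -- the restriction map into `vanishA 𝓕 ↥K`
  have hmem : ∀ ψ : vanishA 𝓕 (Fin (m + 1)),
      𝓕.map f.op (ψ : Fobj 𝓕 (Fin (m + 1))) ∈ vanishA 𝓕 ↥K := by
    intro ψ S hSne hSuniv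
    haveI : DecidableEq ↑(FintypeCat.of (Fin (m + 1))) :=
      inferInstanceAs (DecidableEq (Fin (m + 1)))
    set S' : Finset (Fin (m + 1)) := S.image f with hS'
    set j : FintypeCat.of ↥S ⟶ FintypeCat.of ↥S' :=
      FintypeCat.homMk (fun x => ⟨f x.1, Finset.mem_image_of_mem f x.2⟩) with hj
    have hcomp : inclA S ≫ f = j ≫ inclA S' := rfl
    have hS'ne : S'.Nonempty := hSne.image f
    have hS'card : S'.card = S.card := Finset.card_image_of_injective _ hfinj
    have hSlt : S.card < m + 1 := by
      have h1 : S ⊂ Finset.univ := Finset.ssubset_univ_iff.mpr hSuniv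
      have := Finset.card_lt_card h1
      simpa [hKcard] using this
    have hS'uni : S' ≠ Finset.univ := by
      intro h
      rw [h] at hS'card
      simp at hS'card
      omega
    rw [← mapc, hcomp, mapc]
    rw [ψ.2 S' hS'ne hS'uni]
    simp [map_zero]
  set restr : vanishA 𝓕 (Fin (m + 1)) →ₗ[ℝ] vanishA 𝓕 ↥K :=
    LinearMap.codRestrict (vanishA 𝓕 ↥K)
      (((𝓕.map f.op).hom : Fobj 𝓕 (Fin (m + 1)) →ₗ[ℝ] Fobj 𝓕 ↥K) ∘ₗ
        (vanishA 𝓕 (Fin (m + 1))).subtype) hmem with hrestr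
  set evalF : GlobC 𝓕 faces →ₗ[ℝ] Fobj 𝓕 ↥F :=
    (LinearMap.proj Ff) ∘ₗ (GlobC 𝓕 faces).subtype with hevalF
  set mapu : Fobj 𝓕 ↥F →ₗ[ℝ] Fobj 𝓕 (Fin (m + 2)) :=
    ((𝓕.map u.op).hom : Fobj 𝓕 ↥F →ₗ[ℝ] Fobj 𝓕 (Fin (m + 2))) with hmapu
  refine ⟨mapu ∘ₗ evalF ∘ₗ (Eloc Kf) ∘ₗ restr, ?_, ?_⟩
  · intro ψ
    set φ := Eloc Kf (restr ψ) with hφ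
    show 𝓕.map (castMap m).op (𝓕.map u.op ((φ : ∀ F : faces, Fobj 𝓕 ↥F.1) Ff)) = _
    rw [← mapc]
    have hcomp : castMap m ≫ u = g ≫ inclF hKF := rfl
    rw [hcomp, mapc]
    have hcoh := φ.2 Kf Ff hKF
    rw [trF] at hcoh
    rw [hcoh, hL1 Kf (restr ψ)]
    show 𝓕.map g.op (𝓕.map f.op (ψ : Fobj 𝓕 (Fin (m + 1)))) = _
    rw [← mapc]
    have hgfid : g ≫ f = 𝟙 (FintypeCat.of (Fin (m + 1))) := FintypeCat.hom_ext _ _ hfg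
    rw [hgfid, op_id, CategoryTheory.Functor.map_id]
    rfl
  · intro S hSne hSuniv hSTf ψ
    set φ := Eloc Kf (restr ψ) with hφ
    set S' : Finset Vt := S.image (fun i => ((eF i : ↥F) : Vt)) with hS'
    have hS'F : S' ⊆ F := by
      intro x hx
      obtain ⟨i, _, rfl⟩ := Finset.mem_image.mp hx
      exact (eF i).2
    have hS'ne : S'.Nonempty := hSne.image _
    have hS'faces : S' ∈ faces := hdown F hF S' hS'F hS'ne
    have hS'card : S'.card = S.card := Finset.card_image_of_injective _ heFinj
    have hnotsub : ¬ K ⊆ S' := by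
      intro hsub
      have hSlt : S.card < m + 2 := by
        have h1 : S ⊂ Finset.univ := Finset.ssubset_univ_iff.mpr hSuniv
        have := Finset.card_lt_card h1
        simpa using this
      have hKS' : S' = K := by
        apply (Finset.eq_of_subset_of_card_le hsub ?_).symm
        rw [hS'card, hKcard]; omega
      apply hSTf
      have hsubT : S ⊆ Tface m := by
        intro i hi
        have : ((eF i : ↥F) : Vt) ∈ K := by
          rw [← hKS']
          exact Finset.mem_image_of_mem _ hi
        obtain ⟨j, hj, hji⟩ := Finset.mem_image.mp this
        have : j = i := heFinj hji
        rwa [← this]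
      apply Finset.eq_of_subset_of_card_le hsubT
      rw [Tface_card, ← hKcard, ← hKS', hS'card]
    set w : FintypeCat.of ↥S ⟶ FintypeCat.of ↥S' :=
      FintypeCat.homMk (fun x => ⟨((eF x.1 : ↥F) : Vt), Finset.mem_image_of_mem _ x.2⟩) with hw
    show 𝓕.map (inclA S).op (𝓕.map u.op ((φ : ∀ F : faces, Fobj 𝓕 ↥F.1) Ff)) = 0
    rw [← mapc]
    have hcomp : inclA S ≫ u = w ≫ inclF hS'F := rfl
    rw [hcomp, mapc]
    have hcoh := φ.2 ⟨S', hS'faces⟩ Ff hS'F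
    rw [trF] at hcoh
    rw [hcoh, hL2 Kf ⟨S', hS'faces⟩ hnotsub (restr ψ)]
    simp [map_zero]
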